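/- Let R be a commutative ring, k ≥ 1 and q ≥ 1 integers, n = q·k, and f, g ∈ R[X] of degree < n. For 0 ≤ i < q set F_i = (f quo X^{ki}) mod X^k and G_i = (g quo X^{ki}) mod X^k. Then the top k coefficients of the low short product of f and g are given by a tiling into low and high short products of the blocks: ((f·g) mod X^n) quo X^{n−k} = Σ_{i+j = q−1} ((F_i·G_j) mod X^k) + Σ_{i+j = q−2} ((F_i·G_j) quo X^k), where the first sum is over pairs (i,j) with 0 ≤ i,j < q and i+j = q−1, and the second over pairs with 0 ≤ i,j < q and i+j = q−2 (empty if q = 1). -/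

import Mathlib

open Polynomial

private lemma coeff_modX {R : Type*} [CommRing R] (p : R[X]) (t n : ℕ) :
    (p %ₘ X ^ t).coeff n = if n < t then p.coeff n else 0 := by
  nontriviality R
  have h := modByMonic_add_div p (X ^ t : R[X])
  have hdeg : (p %ₘ X ^ t).degree < (t : ℕ) := by
    simpa [degree_X_pow] using degree_modByMonic_lt p (monic_X_pow (R := R) t)
  have hc := congrArg (fun q : R[X] => q.coeff n) h
  simp only [coeff_add, coeff_X_pow_mul'] at hc
  split_ifs with hn
  · rw [← hc, if_neg (by omega), add_zero]
  · exact coeff_eq_zero_of_degree_lt (hdeg.trans_le (Nat.cast_le.mpr (by omega)))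

private lemma coeff_divXpow {R : Type*} [CommRing R] (p : R[X]) (t n : ℕ) :
    (p /ₘ X ^ t).coeff n = p.coeff (n + t) := by
  nontriviality R
  have h := modByMonic_add_div p (X ^ t : R[X])
  have hdeg : (p %ₘ X ^ t).degree < (t : ℕ) := by
    simpa [degree_X_pow] using degree_modByMonic_lt p (monic_X_pow (R := R) t)
  have hc := congrArg (fun q : R[X] => q.coeff (n + t)) h
  simp only [coeff_add, coeff_X_pow_mul'] at hc
  rw [← hc, coeff_eq_zero_of_degree_lt (hdeg.trans_le (Nat.cast_le.mpr (Nat.le_add_left t n))),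
    zero_add, if_pos (Nat.le_add_left t n), Nat.add_sub_cancel]

private lemma degree_mod_lt' {R : Type*} [CommRing R] (p : R[X]) (k : ℕ) :
    (p %ₘ X ^ k).degree < (k : ℕ) ∨ k = 0 := by
  rcases Nat.eq_zero_or_pos k with h | h
  · exact Or.inr h
  · refine Or.inl ?_
    rw [degree_lt_iff_coeff_zero]
    intro m hm
    rw [coeff_modX, if_neg (by omega)]

private lemma degree_mod_lt {R : Type*} [CommRing R] (p : R[X]) (k : ℕ) (hk : 1 ≤ k) :
    (p %ₘ X ^ k).degree < (k : ℕ) := by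
  rcases degree_mod_lt' p k with h | h
  · exact h
  · omega

private lemma degree_hi_lt {R : Type*} [CommRing R] (a b : R[X]) (k : ℕ) (hk : 1 ≤ k)
    (ha : a.degree < (k : ℕ)) (hb : b.degree < (k : ℕ)) :
    ((a * b) /ₘ X ^ k).degree < (k : ℕ) := by
  rw [degree_lt_iff_coeff_zero]
  intro m hm
  rw [coeff_divXpow, coeff_mul]
  refine Finset.sum_eq_zero fun x hx => ?_
  rw [Finset.HasAntidiagonal.mem_antidiagonal] at hx
  by_cases h : k ≤ x.1
  · rw [coeff_eq_zero_of_degree_lt (ha.trans_le (Nat.cast_le.mpr h)), zero_mul]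
  · rw [coeff_eq_zero_of_degree_lt (hb.trans_le (Nat.cast_le.mpr (by omega))), mul_zero]

private lemma decomp {R : Type*} [CommRing R] (p : R[X]) (k m : ℕ) (hk : 1 ≤ k)
    (hp : p.degree < ((m * k : ℕ) : ℕ)) :
    p = ∑ i ∈ Finset.range m, X ^ (k * i) * ((p /ₘ X ^ (k * i)) %ₘ X ^ k) := by
  ext n
  rw [finset_sum_coeff]
  simp only [coeff_X_pow_mul', coeff_modX, coeff_divXpow]
  by_cases hn : n < m * k
  · have hmod := Nat.mod_add_div n k
    have hltk := Nat.mod_lt n (show 0 < k by omega)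
    rw [Finset.sum_eq_single (n / k)]
    · rw [if_pos (by omega), if_pos (by omega)]
      congr 1
      omega
    · intro i hi hne
      split_ifs with h1 h2
      · exfalso
        apply hne
        have e1 : i * k = k * i := mul_comm _ _
        have e2 : (i + 1) * k = k * i + k := by ring
        have := Nat.div_eq_of_lt_le (show i * k ≤ n by omega)
          (show n < (i + 1) * k by omega)
        omega
      · rfl
      · rfl
    · intro h
      exact absurd (Finset.mem_range.mpr ((Nat.div_lt_iff_lt_mul (by omega)).mpr hn)) h
  · rw [coeff_eq_zero_of_degree_lt (hp.trans_le (Nat.cast_le.mpr (by omega)))]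
    refine (Finset.sum_eq_zero fun i hi => ?_).symm
    split_ifs with h1 h2
    · have h3 : n - k * i + k * i = n := by omega
      rw [h3]
      exact coeff_eq_zero_of_degree_lt (hp.trans_le (Nat.cast_le.mpr (by omega)))
    · rfl
    · rfl

private lemma block_coeff {R : Type*} [CommRing R] (p : R[X]) (k q b n : ℕ)
    (hk : 1 ≤ k) (hq : 1 ≤ q) (hp : p.degree < (k : ℕ)) (hn : n < k) :
    (if k * b ≤ n + (q * k - k) then p.coeff (n + (q * k - k) - k * b) else 0)
      = if b + 1 = q then p.coeff n else 0 := by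
  have hkq : k ≤ q * k := Nat.le_mul_of_pos_left k (by omega)
  by_cases hb : b + 1 = q
  · have h1 : k * b + k = q * k := by rw [← hb]; ring
    rw [if_pos (by omega), if_pos hb]
    congr 1
    omega
  · rw [if_neg hb]
    by_cases hb2 : b + 2 ≤ q
    · have h1 : k * b + 2 * k ≤ q * k := by
        calc k * b + 2 * k = k * (b + 2) := by ring
          _ ≤ k * q := Nat.mul_le_mul_left k hb2
          _ = q * k := mul_comm _ _
      rw [if_pos (by omega),
        coeff_eq_zero_of_degree_lt (hp.trans_le (Nat.cast_le.mpr (by omega)))]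
    · have h1 : q * k ≤ k * b := by
        calc q * k = k * q := mul_comm _ _
          _ ≤ k * b := Nat.mul_le_mul_left k (by omega)
      rw [if_neg (by omega)]

/-- For a commutative ring `R`, `k ≥ 1`, `q ≥ 1`, `n = q·k`, and
`f g : R[X]` of degree `< n`, with blocks `F i = (f quo X^{k·i}) mod X^k` and
`G j = (g quo X^{k·j}) mod X^k`, the top `k` coefficients of the low short product
are given by the tiling
`((f·g) mod X^n) quo X^{n−k} = Σ_{i+j=q−1} (F_i·G_j mod X^k) + Σ_{i+j=q−2} (F_i·G_j quo X^k)`,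
where both sums range over pairs `(i,j)` with `0 ≤ i,j < q` (the second sum being empty
when `q = 1`). -/
theorem short_product_block_tiling
    {R : Type*} [CommRing R] (k q : ℕ) (hk : 1 ≤ k) (hq : 1 ≤ q)
    (f g : R[X]) (hf : f.degree < (q * k : ℕ)) (hg : g.degree < (q * k : ℕ)) :
    ((f * g) %ₘ X ^ (q * k)) /ₘ X ^ (q * k - k) =
      (∑ p ∈ (Finset.range q ×ˢ Finset.range q).filter (fun p => p.1 + p.2 + 1 = q),
          (((f /ₘ X ^ (k * p.1)) %ₘ X ^ k) * ((g /ₘ X ^ (k * p.2)) %ₘ X ^ k)) %ₘ X ^ k)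
      + ∑ p ∈ (Finset.range q ×ˢ Finset.range q).filter (fun p => p.1 + p.2 + 2 = q),
          (((f /ₘ X ^ (k * p.1)) %ₘ X ^ k) * ((g /ₘ X ^ (k * p.2)) %ₘ X ^ k)) /ₘ X ^ k := by
  have hkq : k ≤ q * k := Nat.le_mul_of_pos_left k (by omega)
  set F : ℕ → R[X] := fun i => (f /ₘ X ^ (k * i)) %ₘ X ^ k with hF
  set G : ℕ → R[X] := fun j => (g /ₘ X ^ (k * j)) %ₘ X ^ k with hG
  have hFdeg : ∀ i, (F i).degree < (k : ℕ) := fun i => degree_mod_lt _ k hk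
  have hGdeg : ∀ j, (G j).degree < (k : ℕ) := fun j => degree_mod_lt _ k hk
  have hlodeg : ∀ i j, ((F i * G j) %ₘ X ^ k).degree < (k : ℕ) :=
    fun i j => degree_mod_lt _ k hk
  have hhideg : ∀ i j, ((F i * G j) /ₘ X ^ k).degree < (k : ℕ) :=
    fun i j => degree_hi_lt _ _ k hk (hFdeg i) (hGdeg j)
  have hfg : f * g = ∑ p ∈ Finset.range q ×ˢ Finset.range q,
      (X ^ (k * (p.1 + p.2)) * ((F p.1 * G p.2) %ₘ X ^ k)
        + X ^ (k * (p.1 + p.2 + 1)) * ((F p.1 * G p.2) /ₘ X ^ k)) := by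
    calc f * g = (∑ i ∈ Finset.range q, X ^ (k * i) * F i)
          * (∑ j ∈ Finset.range q, X ^ (k * j) * G j) := by
          rw [← decomp f k q hk hf, ← decomp g k q hk hg]
      _ = ∑ p ∈ Finset.range q ×ˢ Finset.range q,
            (X ^ (k * p.1) * F p.1) * (X ^ (k * p.2) * G p.2) := by
          rw [Finset.sum_mul_sum, ← Finset.sum_product']
      _ = _ := by
          refine Finset.sum_congr rfl fun p _ => ?_
          have h := modByMonic_add_div (F p.1 * G p.2) (X ^ k : R[X])
          have e1 : k * p.1 + k * p.2 = k * (p.1 + p.2) := by ring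
          have e2 : k * (p.1 + p.2) + k = k * (p.1 + p.2 + 1) := by ring
          calc X ^ (k * p.1) * F p.1 * (X ^ (k * p.2) * G p.2)
              = X ^ (k * (p.1 + p.2)) * (F p.1 * G p.2) := by
                rw [← e1, pow_add]; ring
            _ = X ^ (k * (p.1 + p.2)) * ((F p.1 * G p.2) %ₘ X ^ k
                  + X ^ k * ((F p.1 * G p.2) /ₘ X ^ k)) := by rw [h]
            _ = _ := by rw [← e2, pow_add]; ring
  ext n
  rw [coeff_divXpow, coeff_modX]
  by_cases hn : n < k
  · rw [if_pos (by omega), hfg, finset_sum_coeff]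
    simp only [coeff_add, coeff_X_pow_mul']
    rw [finset_sum_coeff, finset_sum_coeff, Finset.sum_filter, Finset.sum_filter,
      ← Finset.sum_add_distrib]
    refine Finset.sum_congr rfl fun p _ => ?_
    rw [block_coeff _ k q (p.1 + p.2) n hk hq (hlodeg p.1 p.2) hn,
      block_coeff _ k q (p.1 + p.2 + 1) n hk hq (hhideg p.1 p.2) hn]
  · rw [if_neg (by omega), coeff_add, finset_sum_coeff, finset_sum_coeff,
      Finset.sum_eq_zero (fun p _ =>
        coeff_eq_zero_of_degree_lt ((hlodeg p.1 p.2).trans_le (Nat.cast_le.mpr (by omega)))),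
      Finset.sum_eq_zero (fun p _ =>
        coeff_eq_zero_of_degree_lt ((hhideg p.1 p.2).trans_le (Nat.cast_le.mpr (by omega)))),
      add_zero]
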